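/- Let V ∈ R^{n×r} with orthonormal columns and Q_t ∈ R^{n×r} with orthonormal columns, and let Z_F be any minimizer over orthogonal Z of ‖Q_t − V Z‖_F. Then ‖Q_t − V Z_F‖₂ ≤ 2√r · ‖V_⊥^T Q_t‖₂, where V_⊥ spans the orthogonal complement of span(V). -/

import Mathlib

open Matrix BigOperators

/-- ℓ2 norm of the i-th row of a matrix. -/
noncomputable def row2 {m n : ℕ} (A : Matrix (Fin m) (Fin n) ℝ) (i : Fin m) : ℝ :=
  Real.sqrt (∑ j, (A i j) ^ 2)

/-- The ℓ2→∞ norm: maximum row ℓ2 norm. -/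
noncomputable def norm2inf {m n : ℕ} (A : Matrix (Fin m) (Fin n) ℝ) : ℝ :=
  ⨆ i, row2 A i

/-- The ℓ∞→ℓ∞ operator norm: maximum row ℓ1 norm. -/
noncomputable def normInfOp {m n : ℕ} (A : Matrix (Fin m) (Fin n) ℝ) : ℝ :=
  ⨆ i, ∑ j, |A i j|

/-- The spectral (ℓ2 operator) norm: sup over unit vectors of ‖Ax‖₂. -/
noncomputable def specNorm {m n : ℕ} (A : Matrix (Fin m) (Fin n) ℝ) : ℝ :=
  ⨆ x : {x : Fin n → ℝ // ∑ j, (x j) ^ 2 = 1}, Real.sqrt (∑ i, (A.mulVec x.1 i) ^ 2)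

/-- The Frobenius norm. -/
noncomputable def frobNorm {m n : ℕ} (A : Matrix (Fin m) (Fin n) ℝ) : ℝ :=
  Real.sqrt (∑ i, ∑ j, (A i j) ^ 2)

/-- The smallest singular value: inf over unit vectors of ‖Mx‖₂. -/
noncomputable def sigmaMin {r : ℕ} (M : Matrix (Fin r) (Fin r) ℝ) : ℝ :=
  ⨅ x : {x : Fin r → ℝ // ∑ j, (x j) ^ 2 = 1}, Real.sqrt (∑ i, (M.mulVec x.1 i) ^ 2)

/-- The ℓ2→∞ subspace distance: inf over orthogonal Z of ‖Q - V Z‖_{2→∞}. -/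
noncomputable def dist2inf {n r : ℕ} (Q V : Matrix (Fin n) (Fin r) ℝ) : ℝ :=
  ⨅ Z : {Z : Matrix (Fin r) (Fin r) ℝ // Zᵀ * Z = 1}, norm2inf (Q - V * Z.1)

private lemma ct_eq {m n : Type*} (A : Matrix m n ℝ) : Aᴴ = Aᵀ := by
  ext i j; simp [Matrix.conjTranspose_apply]

private lemma frobSq_eq_trace {m n : ℕ} (A : Matrix (Fin m) (Fin n) ℝ) :
    (∑ i, ∑ j, (A i j) ^ 2) = (Aᵀ * A).trace := by
  rw [Matrix.trace, Finset.sum_comm]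
  simp [Matrix.diag, Matrix.mul_apply, pow_two]

private lemma specAux {m n : ℕ} (A : Matrix (Fin m) (Fin n) ℝ) (x : Fin n → ℝ)
    (hx : ∑ j, (x j) ^ 2 = 1) :
    Real.sqrt (∑ i, (A.mulVec x i) ^ 2) ≤ frobNorm A := by
  apply Real.sqrt_le_sqrt
  refine Finset.sum_le_sum fun i _ => ?_
  calc (A.mulVec x i) ^ 2 = (∑ j, A i j * x j) ^ 2 := rfl
    _ ≤ (∑ j, (A i j) ^ 2) * ∑ j, (x j) ^ 2 :=
        Finset.sum_mul_sq_le_sq_mul_sq _ _ _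
    _ = ∑ j, (A i j) ^ 2 := by rw [hx, mul_one]

private lemma spec_bdd {m n : ℕ} (A : Matrix (Fin m) (Fin n) ℝ) :
    BddAbove (Set.range fun x : {x : Fin n → ℝ // ∑ j, (x j) ^ 2 = 1} =>
      Real.sqrt (∑ i, (A.mulVec x.1 i) ^ 2)) := by
  refine ⟨frobNorm A, ?_⟩
  rintro _ ⟨x, rfl⟩
  exact specAux A x.1 x.2

private lemma specNorm_nonneg {m n : ℕ} (A : Matrix (Fin m) (Fin n) ℝ) : 0 ≤ specNorm A :=
  Real.iSup_nonneg fun _ => Real.sqrt_nonneg _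

private lemma specNorm_le_frobNorm {m n : ℕ} (A : Matrix (Fin m) (Fin n) ℝ) :
    specNorm A ≤ frobNorm A :=
  Real.iSup_le (fun x => specAux A x.1 x.2) (Real.sqrt_nonneg _)

private lemma col_le_spec {m n : ℕ} (A : Matrix (Fin m) (Fin n) ℝ) (j : Fin n) :
    (∑ i, (A i j) ^ 2) ≤ specNorm A ^ 2 := by
  have hx : ∑ k, (Pi.single j 1 : Fin n → ℝ) k ^ 2 = 1 := by
    simp [Pi.single_apply, Finset.sum_ite_eq']
  have h1 : Real.sqrt (∑ i, (A.mulVec (Pi.single j 1) i) ^ 2) ≤ specNorm A :=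
    le_ciSup (spec_bdd A) ⟨Pi.single j 1, hx⟩
  have h2 : ∀ i, A.mulVec (Pi.single j 1) i = A i j := by
    intro i; simp [Matrix.mulVec_single]
  simp only [h2] at h1
  calc (∑ i, (A i j) ^ 2) = Real.sqrt (∑ i, (A i j) ^ 2) ^ 2 :=
        (Real.sq_sqrt (Finset.sum_nonneg fun i _ => sq_nonneg _)).symm
    _ ≤ specNorm A ^ 2 := by
        apply pow_le_pow_left₀ (Real.sqrt_nonneg _) h1

private lemma frobSq_le_spec {m n : ℕ} (A : Matrix (Fin m) (Fin n) ℝ) :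
    (∑ i, ∑ j, (A i j) ^ 2) ≤ n * specNorm A ^ 2 := by
  rw [Finset.sum_comm]
  calc (∑ j : Fin n, ∑ i, (A i j) ^ 2) ≤ ∑ j : Fin n, specNorm A ^ 2 :=
        Finset.sum_le_sum fun j _ => col_le_spec A j
    _ = n * specNorm A ^ 2 := by simp [mul_comm]

/-- Key existence lemma: if `1 - MᵀM` is PSD (i.e. `‖M‖₂ ≤ 1`), there is an orthogonal `Z`
with `tr(MᵀM) ≤ tr(ZᵀM)` (take `Z` the orthogonal polar factor of `M`). -/
private lemma exists_good_Z {r : ℕ} (M : Matrix (Fin r) (Fin r) ℝ)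
    (hpsd : (1 - Mᵀ * M).PosSemidef) :
    ∃ Z : Matrix (Fin r) (Fin r) ℝ, Zᵀ * Z = 1 ∧ (Mᵀ * M).trace ≤ (Zᵀ * M).trace := by
  have hA : (Mᵀ * M).PosSemidef := by
    rw [← ct_eq]; exact Matrix.posSemidef_conjTranspose_mul_self M
  have hH : (Mᵀ * M).IsHermitian := hA.1
  set P : Matrix (Fin r) (Fin r) ℝ := (Matrix.IsHermitian.eigenvectorUnitary hH :
    Matrix (Fin r) (Fin r) ℝ) with hPdef
  set d : Fin r → ℝ := hH.eigenvalues with hddef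
  have hsP : star P = Pᵀ := by rw [Matrix.star_eq_conjTranspose, ct_eq]
  have hPtP : Pᵀ * P = 1 := by
    rw [← hsP]; exact (Matrix.mem_unitaryGroup_iff').mp (Matrix.IsHermitian.eigenvectorUnitary hH).2
  have hPPt : P * Pᵀ = 1 := by
    rw [← hsP]; exact (Matrix.mem_unitaryGroup_iff).mp (Matrix.IsHermitian.eigenvectorUnitary hH).2
  have hdiag : Pᵀ * (Mᵀ * M) * P = Matrix.diagonal d := by
    rw [← hsP]
    have := Matrix.IsHermitian.conjStarAlgAut_star_eigenvectorUnitary hH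
    rw [Unitary.conjStarAlgAut_apply, Unitary.coe_star, star_star] at this
    rwa [RCLike.ofReal_real_eq_id, Function.id_comp] at this
  have hd0 : ∀ i, 0 ≤ d i := hA.eigenvalues_nonneg
  have hd1 : ∀ i, d i ≤ 1 := by
    have h1 : (Pᵀ * (1 - Mᵀ * M) * P).PosSemidef := by
      have := hpsd.conjTranspose_mul_mul_same P
      rwa [ct_eq] at this
    have h2 : Pᵀ * (1 - Mᵀ * M) * P = Matrix.diagonal (fun i => 1 - d i) := by
      rw [Matrix.mul_sub, Matrix.mul_one, Matrix.sub_mul, hPtP, hdiag]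
      rw [← Matrix.diagonal_one, Matrix.diagonal_sub]
    rw [h2, Matrix.posSemidef_diagonal_iff] at h1
    intro i
    linarith [h1 i]
  set B : Matrix (Fin r) (Fin r) ℝ := M * P with hBdef
  have hBtB : Bᵀ * B = Matrix.diagonal d := by
    rw [hBdef, Matrix.transpose_mul, ← hdiag]; simp only [Matrix.mul_assoc]
  have hcol : ∀ i j, ∑ k, B k i * B k j = Matrix.diagonal d i j := by
    intro i j
    rw [← hBtB]; simp [Matrix.mul_apply]
  set v : Fin r → EuclideanSpace ℝ (Fin r) :=
    fun i => WithLp.toLp 2 (fun j => B j i / Real.sqrt (d i)) with hvdef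
  have hv : Orthonormal ℝ (Set.restrict {i | d i ≠ 0} v) := by
    rw [orthonormal_iff_ite]
    rintro ⟨i, hi⟩ ⟨j, hj⟩
    simp only [Set.restrict_apply, hvdef]
    rw [PiLp.inner_apply]
    simp only [RCLike.inner_apply, conj_trivial, PiLp.toLp_apply]
    have : ∀ k, B k i / Real.sqrt (d i) * (B k j / Real.sqrt (d j)) =
        (B k i * B k j) / (Real.sqrt (d i) * Real.sqrt (d j)) := by intro k; ring
    change ∑ k, B k j / Real.sqrt (d j) * (B k i / Real.sqrt (d i)) = _
    rw [Finset.sum_congr rfl fun k _ => mul_comm (B k j / Real.sqrt (d j)) (B k i / Real.sqrt (d i))]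
    simp only [this, ← Finset.sum_div, hcol i j]
    by_cases hij : i = j
    · subst hij
      simp only [Matrix.diagonal_apply_eq, Real.mul_self_sqrt (hd0 i)]
      rw [div_self hi]
      simp
    · rw [Matrix.diagonal_apply_ne _ hij, zero_div]
      simp [Subtype.mk_eq_mk, hij]
  have hcard : Module.finrank ℝ (EuclideanSpace ℝ (Fin r)) = Fintype.card (Fin r) := by
    simp [finrank_euclideanSpace_fin]
  obtain ⟨b, hb⟩ := hv.exists_orthonormalBasis_extension_of_card_eq hcard
  set U : Matrix (Fin r) (Fin r) ℝ := Matrix.of (fun j i => b i j) with hUdef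
  have hUtU : Uᵀ * U = 1 := by
    ext i i'
    have := orthonormal_iff_ite.mp b.orthonormal i i'
    rw [PiLp.inner_apply] at this
    simp only [RCLike.inner_apply, conj_trivial] at this
    simp only [Matrix.mul_apply, Matrix.transpose_apply, hUdef, Matrix.of_apply,
      Matrix.one_apply]
    rw [← this]; exact Finset.sum_congr rfl fun _ _ => mul_comm _ _
  refine ⟨U * Pᵀ, ?_, ?_⟩
  · rw [Matrix.transpose_mul, Matrix.transpose_transpose, Matrix.mul_assoc,
      ← Matrix.mul_assoc Uᵀ, hUtU, Matrix.one_mul, hPPt]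
  · have htr1 : ((U * Pᵀ)ᵀ * M).trace = (Uᵀ * B).trace := by
      rw [Matrix.transpose_mul, Matrix.transpose_transpose, Matrix.mul_assoc,
        Matrix.trace_mul_comm, Matrix.mul_assoc]
    have hdiagentry : ∀ i, (Uᵀ * B) i i = Real.sqrt (d i) := by
      intro i
      by_cases hi : d i ≠ 0
      · have hbv := hb i hi
        simp only [Matrix.mul_apply, Matrix.transpose_apply, hUdef, Matrix.of_apply, hbv, hvdef, PiLp.toLp_apply]
        have : ∀ k, B k i / Real.sqrt (d i) * B k i = (B k i * B k i) / Real.sqrt (d i) := by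
          intro k; ring
        simp only [this, ← Finset.sum_div, hcol i i, Matrix.diagonal_apply_eq]
        exact Real.div_sqrt
      · push_neg at hi
        have hzero : ∀ k, B k i = 0 := by
          intro k
          have h := hcol i i
          rw [Matrix.diagonal_apply_eq, hi] at h
          have hsq : ∑ k, B k i ^ 2 = 0 := by rw [← h]; simp [pow_two]
          have := (Finset.sum_eq_zero_iff_of_nonneg (fun k _ => sq_nonneg (B k i))).mp hsq k
            (Finset.mem_univ k)
          exact pow_eq_zero_iff (n := 2) (by norm_num) |>.mp this
        simp [Matrix.mul_apply, hzero, hi]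
    have htrace_sqrt : ((U * Pᵀ)ᵀ * M).trace = ∑ i, Real.sqrt (d i) := by
      rw [htr1, Matrix.trace]
      exact Finset.sum_congr rfl fun i _ => hdiagentry i
    have htrMM : (Mᵀ * M).trace = ∑ i, d i := by
      have h : Mᵀ * M = P * Matrix.diagonal d * Pᵀ := by
        rw [← hdiag]
        rw [← Matrix.mul_assoc, ← Matrix.mul_assoc, hPPt, Matrix.one_mul, Matrix.mul_assoc,
          Matrix.mul_assoc, hPPt, Matrix.mul_one]
      rw [h, Matrix.trace_mul_comm, ← Matrix.mul_assoc, hPtP, Matrix.one_mul,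
        Matrix.trace_diagonal]
    rw [htrace_sqrt, htrMM]
    refine Finset.sum_le_sum fun i _ => ?_
    have h := hd0 i
    have h1 := hd1 i
    nlinarith [Real.sq_sqrt h, Real.sqrt_nonneg (d i)]

/-- the Procrustes solution satisfies
‖Q_t − V Z_F‖₂ ≤ 2√r ‖V_⊥ᵀ Q_t‖₂. -/
theorem procrustes_solution_spec_bound {n r : ℕ}
    (V Qt : Matrix (Fin n) (Fin r) ℝ) (Vp : Matrix (Fin n) (Fin (n - r)) ℝ)
    (ZF : Matrix (Fin r) (Fin r) ℝ)
    (hV : Vᵀ * V = 1) (hQt : Qtᵀ * Qt = 1) (hVp : Vpᵀ * Vp = 1)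
    (hperp : Vpᵀ * V = 0)
    (hZF : ZFᵀ * ZF = 1)
    (hmin : ∀ Z : Matrix (Fin r) (Fin r) ℝ, Zᵀ * Z = 1 →
      frobNorm (Qt - V * ZF) ≤ frobNorm (Qt - V * Z)) :
    specNorm (Qt - V * ZF) ≤ 2 * Real.sqrt r * specNorm (Vpᵀ * Qt) := by
  -- `r ≤ n` and the full orthogonal decomposition `V Vᵀ + V⊥ V⊥ᵀ = 1`
  have hrn : r ≤ n := by
    have h1 : (Vᵀ * V).rank = r := by rw [hV, Matrix.rank_one, Fintype.card_fin]
    have h2 := Matrix.rank_mul_le_left Vᵀ V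
    have h3 := Matrix.rank_le_width Vᵀ
    omega
  have hperp' : Vᵀ * Vp = 0 := by
    have := congrArg Matrix.transpose hperp
    rwa [Matrix.transpose_mul, Matrix.transpose_transpose, Matrix.transpose_zero] at this
  have e : Fin n ≃ Fin r ⊕ Fin (n - r) :=
    (finCongr (by omega : n = r + (n - r))).trans finSumFinEquiv.symm
  have hblock : Matrix.fromRows Vᵀ Vpᵀ * Matrix.fromCols V Vp = 1 := by
    rw [Matrix.fromRows_mul_fromCols, hV, hVp, hperp, hperp', Matrix.fromBlocks_one]
  have hcompl : V * Vᵀ + Vp * Vpᵀ = 1 := by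
    have h := (Matrix.fromCols_mul_fromRows_eq_one_comm e V Vp Vᵀ Vpᵀ).mpr hblock
    rwa [Matrix.fromCols_mul_fromRows] at h
  -- `MᵀM + NᵀN = 1` with `M = VᵀQt`, `N = V⊥ᵀQt`
  have hMN : (Vᵀ*Qt)ᵀ*(Vᵀ*Qt) + (Vpᵀ*Qt)ᵀ*(Vpᵀ*Qt) = 1 := by
    have h : (Vᵀ*Qt)ᵀ*(Vᵀ*Qt) + (Vpᵀ*Qt)ᵀ*(Vpᵀ*Qt) = Qtᵀ * ((V*Vᵀ + Vp*Vpᵀ) * Qt) := by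
      simp only [Matrix.transpose_mul, Matrix.transpose_transpose, Matrix.add_mul,
        Matrix.mul_add, Matrix.mul_assoc]
    rw [h, hcompl, Matrix.one_mul, hQt]
  have hNN : (1 : Matrix (Fin r) (Fin r) ℝ) - (Vᵀ*Qt)ᵀ*(Vᵀ*Qt) = (Vpᵀ*Qt)ᵀ*(Vpᵀ*Qt) := by
    rw [← hMN]; abel
  have hpsd : ((1 : Matrix (Fin r) (Fin r) ℝ) - (Vᵀ*Qt)ᵀ*(Vᵀ*Qt)).PosSemidef := by
    rw [hNN, ← ct_eq]
    exact Matrix.posSemidef_conjTranspose_mul_self _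
  obtain ⟨Z, hZZ, htr⟩ := exists_good_Z (Vᵀ*Qt) hpsd
  -- Frobenius norm of the residual for an arbitrary orthogonal `W`
  have hfrob : ∀ W : Matrix (Fin r) (Fin r) ℝ, Wᵀ * W = 1 →
      (∑ i, ∑ j, ((Qt - V*W) i j)^2) = 2*(r:ℝ) - 2*(Wᵀ*(Vᵀ*Qt)).trace := by
    intro W hW
    rw [frobSq_eq_trace]
    have h1 : (Qt - V*W)ᵀ*(Qt - V*W) =
        Qtᵀ*Qt - Qtᵀ*(V*W) - Wᵀ*(Vᵀ*Qt) + Wᵀ*((Vᵀ*V)*W) := by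
      simp only [Matrix.transpose_sub, Matrix.transpose_mul, Matrix.sub_mul, Matrix.mul_sub,
        Matrix.mul_assoc]
      abel
    have h2 : (Qtᵀ*(V*W)).trace = (Wᵀ*(Vᵀ*Qt)).trace := by
      rw [← Matrix.trace_transpose (Qtᵀ*(V*W)), Matrix.transpose_mul, Matrix.transpose_transpose,
        Matrix.transpose_mul, Matrix.mul_assoc]
    rw [h1, hV, hQt, Matrix.one_mul, hW]
    rw [Matrix.trace_add, Matrix.trace_sub, Matrix.trace_sub, h2, Matrix.trace_one]
    simp [Fintype.card_fin]
    ring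
  -- Frobenius norm squared of `N` via traces
  have hNfr : (∑ i, ∑ j, ((Vpᵀ*Qt) i j)^2) = (r:ℝ) - ((Vᵀ*Qt)ᵀ*(Vᵀ*Qt)).trace := by
    rw [frobSq_eq_trace, ← hNN, Matrix.trace_sub, Matrix.trace_one]
    simp [Fintype.card_fin]
  set s : ℝ := specNorm (Vpᵀ * Qt) with hsdef
  have hs : 0 ≤ s := specNorm_nonneg _
  have hNle : ((r:ℝ) - ((Vᵀ*Qt)ᵀ*(Vᵀ*Qt)).trace) ≤ r * s ^ 2 := by
    rw [← hNfr]; exact frobSq_le_spec _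
  have key : (∑ i, ∑ j, ((Qt - V*Z) i j)^2) ≤ 2*(r:ℝ)*s^2 := by
    rw [hfrob Z hZZ]
    linarith [htr]
  have h4 : (2*(r:ℝ))*s^2 ≤ (2*Real.sqrt r * s)^2 := by
    have hr : (Real.sqrt r)^2 = (r:ℝ) := Real.sq_sqrt (Nat.cast_nonneg r)
    nlinarith [mul_nonneg (Nat.cast_nonneg (α := ℝ) r) (sq_nonneg s)]
  calc specNorm (Qt - V * ZF) ≤ frobNorm (Qt - V * ZF) := specNorm_le_frobNorm _
    _ ≤ frobNorm (Qt - V * Z) := hmin Z hZZ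
    _ = Real.sqrt (∑ i, ∑ j, ((Qt - V*Z) i j)^2) := rfl
    _ ≤ Real.sqrt ((2*Real.sqrt r * s)^2) := by
        apply Real.sqrt_le_sqrt
        calc (∑ i, ∑ j, ((Qt - V*Z) i j)^2) ≤ 2*(r:ℝ)*s^2 := key
          _ ≤ (2*Real.sqrt r * s)^2 := by linarith [h4]
    _ = 2 * Real.sqrt r * s := Real.sqrt_sq (by positivity)
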